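/- arXiv:2205.13941 — 4 statements merged into one kernel-verified Lean document; each statement's English description precedes it below -/
import Mathlib

section
/- For n×n real symmetric positive semidefinite matrices A, B with A ≥ B (meaning A - B is positive semidefinite) and tr(A) > 0, and for α > 1, the sandwiched Rényi divergence D_α(A‖B) := (1/(α-1)) · log( (1/tr A) · tr[(B^{(1-α)/(2α)} A B^{(1-α)/(2α)})^α] ) is nonnegative, provided the kernel of B is contained in the kernel of A. -/
open Matrix

noncomputable def mpow {m : Type*} [Fintype m] [DecidableEq m] (A : Matrix m m ℝ) (r : ℝ) :
    Matrix m m ℝ :=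
  if hA : A.IsHermitian then
    (hA.eigenvectorUnitary : Matrix m m ℝ) *
      Matrix.diagonal (fun i => (hA.eigenvalues i : ℝ) ^ r) *
      star (hA.eigenvectorUnitary : Matrix m m ℝ)
  else 0

/-- Sandwiched quantum Rényi divergence of order `α`. -/
noncomputable def sandwichedRenyi {m : Type*} [Fintype m] [DecidableEq m]
    (α : ℝ) (A B : Matrix m m ℝ) : ℝ :=
  (α - 1)⁻¹ *
    Real.log ((mpow (mpow B ((1 - α) / (2 * α)) * A * mpow B ((1 - α) / (2 * α))) α).trace
      / A.trace)

/-- Regularized sandwiched quantum Rényi divergence `D_{α,λ}(A‖B) := D_α(A‖B + λI)`. -/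
noncomputable def regRenyi {m : Type*} [Fintype m] [DecidableEq m]
    (α lam : ℝ) (A B : Matrix m m ℝ) : ℝ :=
  sandwichedRenyi α A (B + lam • 1)

namespace SandwichAux

variable {n : Type*} [Fintype n] [DecidableEq n]

lemma mpow_eq {A : Matrix n n ℝ} (hA : A.IsHermitian) (r : ℝ) :
    mpow A r = (hA.eigenvectorUnitary : Matrix n n ℝ) *
      Matrix.diagonal (fun i => (hA.eigenvalues i : ℝ) ^ r) *
      star (hA.eigenvectorUnitary : Matrix n n ℝ) := dif_pos hA

lemma spectral_mul {A : Matrix n n ℝ} (hA : A.IsHermitian) (f g : n → ℝ) :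
    ((hA.eigenvectorUnitary : Matrix n n ℝ) * Matrix.diagonal f *
        star (hA.eigenvectorUnitary : Matrix n n ℝ)) *
      ((hA.eigenvectorUnitary : Matrix n n ℝ) * Matrix.diagonal g *
        star (hA.eigenvectorUnitary : Matrix n n ℝ)) =
    (hA.eigenvectorUnitary : Matrix n n ℝ) * Matrix.diagonal (fun i => f i * g i) *
      star (hA.eigenvectorUnitary : Matrix n n ℝ) := by
  have h : star (hA.eigenvectorUnitary : Matrix n n ℝ) *
      (hA.eigenvectorUnitary : Matrix n n ℝ) = 1 :=
    Matrix.UnitaryGroup.star_mul_self _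
  rw [show ∀ X Y D E : Matrix n n ℝ, (X * D * Y) * (X * E * Y) = X * D * (Y * X) * E * Y from
    fun X Y D E => by noncomm_ring, h, mul_one, mul_assoc _ (Matrix.diagonal f),
    diagonal_mul_diagonal]

lemma spectral_trace {A : Matrix n n ℝ} (hA : A.IsHermitian) (f : n → ℝ) :
    ((hA.eigenvectorUnitary : Matrix n n ℝ) * Matrix.diagonal f *
        star (hA.eigenvectorUnitary : Matrix n n ℝ)).trace = ∑ i, f i := by
  rw [Matrix.trace_mul_cycle, Matrix.UnitaryGroup.star_mul_self, one_mul, Matrix.trace_diagonal]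

lemma spectral_self {A : Matrix n n ℝ} (hA : A.IsHermitian) :
    A = (hA.eigenvectorUnitary : Matrix n n ℝ) * Matrix.diagonal (fun i => hA.eigenvalues i) *
      star (hA.eigenvectorUnitary : Matrix n n ℝ) := by
  conv_lhs => rw [hA.spectral_theorem]
  congr 1

end SandwichAux

open SandwichAux in
/-- Order property: if `A ≥ B ≥ 0` with `tr A > 0`, `ker B ⊆ ker A` and `α > 1`, then the
sandwiched quantum Rényi divergence `D_α(A‖B)` is nonnegative. -/
theorem sandwichedRenyi_nonneg_of_le {n : Type*} [Fintype n] [DecidableEq n]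
    (α : ℝ) (hα : 1 < α) (A B : Matrix n n ℝ)
    (hA : A.PosSemidef) (hB : B.PosSemidef) (hAB : (A - B).PosSemidef)
    (htr : 0 < A.trace)
    (hker : ∀ v, B *ᵥ v = 0 → A *ᵥ v = 0) :
    0 ≤ sandwichedRenyi α A B := by
  classical
  have hα0 : (0:ℝ) < α := lt_trans one_pos hα
  have hα1 : (0:ℝ) < α - 1 := sub_pos.2 hα
  set c : ℝ := (1 - α) / (2 * α) with hc_def
  have hc_neg : c < 0 := div_neg_of_neg_of_pos (by linarith) (by linarith)
  have hc_ne : c ≠ 0 := ne_of_lt hc_neg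
  set q : ℝ := α / (α - 1) with hq_def
  have hq0 : 0 < q := div_pos hα0 hα1
  have hq1 : 1 ≤ q := by
    rw [hq_def, le_div_iff₀ hα1]; linarith
  have hpq : α.HolderConjugate q := by
    rw [Real.holderConjugate_iff]
    refine ⟨hα, ?_⟩
    rw [hq_def]; field_simp; ring
  set d : ℝ := -(2 * c) with hd_def
  have hd_eq : d = (α - 1) / α := by rw [hd_def, hc_def]; field_simp; ring
  have hd_pos : 0 < d := by rw [hd_eq]; exact div_pos hα1 hα0
  have hdq : d * q = 1 := by rw [hd_eq, hq_def]; field_simp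
  -- rpow addition lemma
  have hrpow : ∀ (x : ℝ), 0 ≤ x → ∀ p r : ℝ, p + r ≠ 0 → p ≠ 0 →
      x ^ p * x ^ r = x ^ (p + r) := by
    intro x hx p r hpr hp
    rcases hx.eq_or_lt with h | h
    · rcases eq_or_ne r 0 with hr | hr
      · subst hr; simp only [add_zero] at hpr ⊢
        simp [← h, Real.zero_rpow hpr]
      · rw [← h, Real.zero_rpow hp, Real.zero_rpow hpr, zero_mul]
    · rw [Real.rpow_add h]
  have hncne : -c ≠ 0 := neg_ne_zero.2 hc_ne
  have hcd_sum : c + d = -c := by rw [hd_def]; ring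
  -- matrices
  have hBh : B.IsHermitian := hB.isHermitian
  set U : Matrix n n ℝ := (hBh.eigenvectorUnitary : Matrix n n ℝ) with hU_def
  set μ : n → ℝ := hBh.eigenvalues with hmu_def
  have hμ0 : ∀ i, 0 ≤ μ i := fun i => hB.eigenvalues_nonneg i
  have hU'U : star U * U = 1 := Matrix.UnitaryGroup.star_mul_self _
  have hUU' : U * star U = 1 := Matrix.mem_unitaryGroup_iff.mp hBh.eigenvectorUnitary.2
  set S : Matrix n n ℝ := mpow B c with hS_def
  have hSeq : S = U * Matrix.diagonal (fun i => μ i ^ c) * star U := mpow_eq hBh c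
  have hSh : S.IsHermitian := by
    rw [hSeq, Matrix.star_eq_conjTranspose]
    exact Matrix.isHermitian_mul_mul_conjTranspose U (Matrix.isHermitian_diagonal_iff.mpr (fun i => IsSelfAdjoint.all _))
  set M : Matrix n n ℝ := S * A * S with hM_def
  have hM : M.PosSemidef := by
    have h := hA.mul_mul_conjTranspose_same S
    rwa [hSh.eq] at h
  set N : Matrix n n ℝ := mpow B d with hN_def
  set ν : n → ℝ := fun i => μ i ^ d with hnu_def
  have hNeq : N = U * Matrix.diagonal ν * star U := mpow_eq hBh d
  have hν0 : ∀ j, 0 ≤ ν j := fun j => Real.rpow_nonneg (hμ0 j) d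
  -- the support projection
  set P : Matrix n n ℝ := U * Matrix.diagonal (fun i => μ i ^ (-c) * μ i ^ c) * star U with hP_def
  -- Step A : trace (M * N) = trace A
  have hSN : S * N = U * Matrix.diagonal (fun i => μ i ^ (-c)) * star U := by
    have hfun : (fun i => μ i ^ c * μ i ^ d) = fun i => μ i ^ (-c) := by
      funext i
      rw [hrpow (μ i) (hμ0 i) c d (by rw [hcd_sum]; exact hncne) hc_ne, hcd_sum]
    rw [hSeq, hNeq, spectral_mul hBh, hfun]
  have hSNS : S * N * S = P := by
    rw [hSN, hSeq, spectral_mul hBh, hP_def]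
  have hBP : B * P = B := by
    have hBeq : B = U * Matrix.diagonal (fun i => μ i) * star U := spectral_self hBh
    have hfun : (fun i => μ i * (μ i ^ (-c) * μ i ^ c)) = fun i => μ i := by
      funext i
      rcases (hμ0 i).eq_or_lt with h | h
      · rw [← h]; simp [Real.zero_rpow hncne]
      · rw [← Real.rpow_add h, neg_add_cancel, Real.rpow_zero, mul_one]
    rw [hP_def]
    conv_lhs => rw [hBeq]
    rw [spectral_mul hBh, hfun]
    exact hBeq.symm
  have hAP : A * P = A := by
    have hB1P : B * (1 - P) = 0 := by rw [mul_sub, mul_one, hBP, sub_self]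
    have hcols : ∀ j, B *ᵥ (fun k => (1 - P) k j) = 0 := by
      intro j
      funext i
      have h := congrFun (congrFun hB1P i) j
      simpa [Matrix.mul_apply, Matrix.mulVec, dotProduct] using h
    have hA1P : A * (1 - P) = 0 := by
      ext i j
      have h := congrFun (hker _ (hcols j)) i
      simpa [Matrix.mul_apply, Matrix.mulVec, dotProduct] using h
    rw [mul_sub, mul_one, sub_eq_zero] at hA1P
    exact hA1P.symm
  have stepA : (M * N).trace = A.trace :=
    calc (M * N).trace = ((S * A) * (S * N)).trace := by rw [hM_def, mul_assoc (S * A) S N]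
      _ = ((S * N) * (S * A)).trace := Matrix.trace_mul_comm _ _
      _ = ((S * N * S) * A).trace := by rw [mul_assoc (S * N) S A]
      _ = (P * A).trace := by rw [hSNS]
      _ = (A * P).trace := Matrix.trace_mul_comm _ _
      _ = A.trace := by rw [hAP]
  -- Step B : trace (M * N) as a weighted sum over eigenvalues of M
  have hMh : M.IsHermitian := hM.isHermitian
  set V : Matrix n n ℝ := (hMh.eigenvectorUnitary : Matrix n n ℝ) with hV_def
  set lam : n → ℝ := hMh.eigenvalues with hlam_def
  have hlam0 : ∀ i, 0 ≤ lam i := fun i => hM.eigenvalues_nonneg i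
  have hV'V : star V * V = 1 := Matrix.UnitaryGroup.star_mul_self _
  have hVV' : V * star V = 1 := Matrix.mem_unitaryGroup_iff.mp hMh.eigenvectorUnitary.2
  set C : Matrix n n ℝ := star V * U with hC_def
  have hstarC : star C = star U * V := by rw [hC_def, StarMul.star_mul, star_star]
  have hCC' : C * star C = 1 := by
    rw [hC_def, hstarC, mul_assoc, ← mul_assoc U (star U) V, hUU', one_mul, hV'V]
  have hC'C : star C * C = 1 := by
    rw [hC_def, hstarC, mul_assoc, ← mul_assoc V (star V) U, hVV', one_mul, hU'U]
  have hrow : ∀ i, ∑ j, C i j * C i j = 1 := by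
    intro i
    have h := congrFun (congrFun hCC' i) i
    rw [Matrix.mul_apply] at h
    simpa [Matrix.star_eq_conjTranspose, Matrix.conjTranspose_apply, Matrix.one_apply_eq] using h
  have hcol : ∀ j, ∑ i, C i j * C i j = 1 := by
    intro j
    have h := congrFun (congrFun hC'C j) j
    rw [Matrix.mul_apply] at h
    simpa [Matrix.star_eq_conjTranspose, Matrix.conjTranspose_apply, Matrix.one_apply_eq,
      mul_comm] using h
  set b : n → ℝ := fun i => ∑ j, ν j * (C i j * C i j) with hb_def
  have hb0 : ∀ i, 0 ≤ b i := by
    intro i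
    exact Finset.sum_nonneg fun j _ => mul_nonneg (hν0 j) (mul_self_nonneg _)
  have hform : (star V * N) * V = C * Matrix.diagonal ν * star C := by
    rw [hNeq, hC_def, hstarC]
    simp only [Matrix.mul_assoc]
  have hXii : ∀ i, ((star V * N) * V) i i = b i := by
    intro i
    rw [hform, Matrix.mul_apply, hb_def]
    refine Finset.sum_congr rfl fun j _ => ?_
    rw [Matrix.mul_diagonal, Matrix.star_eq_conjTranspose, Matrix.conjTranspose_apply,
      star_trivial]
    ring
  have hMeq : M = V * Matrix.diagonal (fun i => lam i) * star V := spectral_self hMh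
  have stepB : (M * N).trace = ∑ i, lam i * b i := by
    calc (M * N).trace = ((V * Matrix.diagonal (fun i => lam i)) * (star V * N)).trace := by
          conv_lhs => rw [hMeq]
          rw [mul_assoc (V * Matrix.diagonal (fun i => lam i)) (star V) N]
      _ = ((star V * N) * (V * Matrix.diagonal (fun i => lam i))).trace :=
          Matrix.trace_mul_comm _ _
      _ = (((star V * N) * V) * Matrix.diagonal (fun i => lam i)).trace := by simp only [← mul_assoc]
      _ = ∑ i, lam i * b i := by
          rw [Matrix.trace]
          refine Finset.sum_congr rfl fun i _ => ?_
          rw [Matrix.diag_apply, Matrix.mul_diagonal, hXii i, mul_comm]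
  -- eigenvalue sums and scalar inequalities
  set Sn : ℝ := ∑ i, lam i ^ α with hSn_def
  have hSn0 : 0 ≤ Sn := Finset.sum_nonneg fun i _ => Real.rpow_nonneg (hlam0 i) α
  have hνq : ∀ j, ν j ^ q = μ j := by
    intro j
    show (μ j ^ d) ^ q = μ j
    rw [← Real.rpow_mul (hμ0 j), hdq, Real.rpow_one]
  have hJ : ∀ i, b i ^ q ≤ ∑ j, (C i j * C i j) * ν j ^ q := by
    intro i
    have hmain := (convexOn_rpow hq1).map_sum_le (t := Finset.univ)
      (w := fun j => C i j * C i j) (p := ν)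
      (fun j _ => mul_self_nonneg _) (hrow i) (fun j _ => Set.mem_Ici.mpr (hν0 j))
    simp only [smul_eq_mul] at hmain
    have hbi : b i = ∑ j, (C i j * C i j) * ν j := by
      show (∑ j, ν j * (C i j * C i j)) = _
      exact Finset.sum_congr rfl fun j _ => mul_comm _ _
    rw [hbi]
    exact hmain
  have hsum_bq : ∑ i, b i ^ q ≤ A.trace := by
    have h1 : ∑ i, b i ^ q ≤ ∑ i, ∑ j, (C i j * C i j) * ν j ^ q :=
      Finset.sum_le_sum fun i _ => hJ i
    have h2 : ∑ i, ∑ j, (C i j * C i j) * ν j ^ q = ∑ j, μ j := by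
      rw [Finset.sum_comm]
      refine Finset.sum_congr rfl fun j _ => ?_
      rw [← Finset.sum_mul, hcol j, one_mul, hνq j]
    have hBtr : B.trace = ∑ j, μ j := by
      conv_lhs => rw [spectral_self hBh]
      exact spectral_trace hBh _
    have hABtr : 0 ≤ (A - B).trace := by
      have heq : (A - B).trace = ∑ i, hAB.isHermitian.eigenvalues i := by
        conv_lhs => rw [spectral_self hAB.isHermitian]
        exact spectral_trace _ _
      rw [heq]
      exact Finset.sum_nonneg fun i _ => hAB.eigenvalues_nonneg i
    rw [Matrix.trace_sub] at hABtr
    linarith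
  have hb2 : ∑ i, lam i * b i = A.trace := by rw [← stepB, stepA]
  have hY : ∀ t : ℝ, 0 < t →
      A.trace ≤ t ^ α / α * Sn + (t⁻¹) ^ q / q * A.trace := by
    intro t ht
    have hstep : ∀ i, lam i * b i ≤ t ^ α * lam i ^ α / α + (t⁻¹) ^ q * b i ^ q / q := by
      intro i
      have hy := Real.young_inequality_of_nonneg (mul_nonneg ht.le (hlam0 i))
        (mul_nonneg (inv_nonneg.mpr ht.le) (hb0 i)) hpq
      rw [Real.mul_rpow ht.le (hlam0 i), Real.mul_rpow (inv_nonneg.mpr ht.le) (hb0 i)] at hy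
      calc lam i * b i = (t * lam i) * (t⁻¹ * b i) := by
            field_simp
        _ ≤ _ := hy
    calc A.trace = ∑ i, lam i * b i := hb2.symm
      _ ≤ ∑ i, (t ^ α * lam i ^ α / α + (t⁻¹) ^ q * b i ^ q / q) :=
          Finset.sum_le_sum fun i _ => hstep i
      _ = t ^ α / α * Sn + (t⁻¹) ^ q / q * ∑ i, b i ^ q := by
          rw [Finset.sum_add_distrib, hSn_def, Finset.mul_sum, Finset.mul_sum]
          congr 1 <;> exact Finset.sum_congr rfl fun i _ => by ring
      _ ≤ t ^ α / α * Sn + (t⁻¹) ^ q / q * A.trace := by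
          have hnn : 0 ≤ (t⁻¹) ^ q / q :=
            div_nonneg (Real.rpow_nonneg (inv_nonneg.mpr ht.le) q) hq0.le
          exact add_le_add_right (mul_le_mul_of_nonneg_left hsum_bq hnn) _
  have key : A.trace ≤ Sn := by
    by_contra hcon
    push_neg at hcon
    rcases hSn0.eq_or_lt with hS0 | hSpos
    · set t : ℝ := ((q / 2) ^ (q⁻¹))⁻¹ with ht_def
      have hq2 : (0:ℝ) < q / 2 := by positivity
      have htpos : 0 < t := by
        rw [ht_def]
        exact inv_pos.mpr (Real.rpow_pos_of_pos hq2 _)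
      have ht1 : (t⁻¹) ^ q = q / 2 := by
        rw [ht_def, inv_inv, ← Real.rpow_mul hq2.le, inv_mul_cancel₀ hq0.ne', Real.rpow_one]
      have h := hY t htpos
      rw [← hS0, mul_zero, zero_add, ht1] at h
      have heq : (q / 2) / q = 1 / 2 := by field_simp
      rw [heq] at h
      linarith
    · set t : ℝ := (A.trace / Sn) ^ (α⁻¹) with ht_def
      have hr0 : 0 < A.trace / Sn := div_pos htr hSpos
      have hr1 : 1 < A.trace / Sn := (one_lt_div hSpos).mpr hcon
      have htpos : 0 < t := Real.rpow_pos_of_pos hr0 _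
      have htα : t ^ α = A.trace / Sn := by
        rw [ht_def, ← Real.rpow_mul hr0.le, inv_mul_cancel₀ hα0.ne', Real.rpow_one]
      have hinv : (t⁻¹) ^ q < 1 := by
        rw [ht_def, ← Real.rpow_neg hr0.le, ← Real.rpow_mul hr0.le]
        exact Real.rpow_lt_one_of_one_lt_of_neg hr1
          (mul_neg_of_neg_of_pos (neg_neg_iff_pos.mpr (inv_pos.mpr hα0)) hq0)
      have h := hY t htpos
      rw [htα] at h
      have heq1 : A.trace / Sn / α * Sn = A.trace / α := by
        field_simp
      have h2 : (t⁻¹) ^ q / q * A.trace < 1 / q * A.trace := by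
        calc (t⁻¹) ^ q / q * A.trace = (t⁻¹) ^ q * (A.trace / q) := by ring
          _ < 1 * (A.trace / q) := mul_lt_mul_of_pos_right hinv (div_pos htr hq0)
          _ = 1 / q * A.trace := by ring
      have h3 : A.trace / α + 1 / q * A.trace = A.trace := by
        have hc2 := hpq.inv_add_inv_eq_one
        calc A.trace / α + 1 / q * A.trace = A.trace * (α⁻¹ + q⁻¹) := by ring
          _ = A.trace := by rw [hc2, mul_one]
      rw [heq1] at h
      linarith
  -- final assembly
  have hT : (mpow M α).trace = Sn := by
    rw [mpow_eq hMh α, spectral_trace, hSn_def]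
  unfold sandwichedRenyi
  rw [show (1 - α) / (2 * α) = c from hc_def.symm, ← hS_def, ← hM_def, hT]
  apply mul_nonneg (inv_nonneg.mpr hα1.le)
  exact Real.log_nonneg ((one_le_div htr).mpr key)
end

section
/- Let p, q be probability measures on a measurable space X and suppose p(S) ≤ e^ε q(S) + δ/2 for all measurable S. Let φ : X → H be a measurable map into a Hilbert space with ‖φ(x)‖ ≤ 1 for all x, and set Σ_p = ∫ φ(x)φ(x)* dp(x), Σ_q = ∫ φ(x)φ(x)* dq(x). Then Σ_p ≤ e^ε Σ_q + δ·Id in the Loewner order, i.e. ⟨f, Σ_p f⟩ ≤ e^ε ⟨f, Σ_q f⟩ + δ‖f‖² for all f ∈ H. -/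
open MeasureTheory

/-- If `p(S) ≤ e^ε q(S) + δ/2` for all measurable `S` and `‖φ(x)‖ ≤ 1`, then
`Σ_p ≤ e^ε Σ_q + δ·Id` in the Loewner order, i.e.
`⟨f, Σ_p f⟩ ≤ e^ε ⟨f, Σ_q f⟩ + δ‖f‖²` for all `f`, where
`⟨f, Σ_p f⟩ = ∫ ⟨f, φ(x)⟩² dp(x)`. -/
theorem dp_implies_loewner {X : Type*} [MeasurableSpace X]
    {H : Type*} [NormedAddCommGroup H] [InnerProductSpace ℝ H]
    [MeasurableSpace H] [BorelSpace H]
    (p q : Measure X) [IsProbabilityMeasure p] [IsProbabilityMeasure q]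
    (ε δ : ℝ) (hε : 0 < ε) (hδ : 0 < δ)
    (hdp : ∀ S : Set X, MeasurableSet S → (p S).toReal ≤ Real.exp ε * (q S).toReal + δ / 2)
    (φ : X → H) (hφm : Measurable φ) (hφ : ∀ x, ‖φ x‖ ≤ 1) (f : H) :
    ∫ x, (inner ℝ f (φ x) : ℝ) ^ 2 ∂p
      ≤ Real.exp ε * ∫ x, (inner ℝ f (φ x) : ℝ) ^ 2 ∂q + δ * ‖f‖ ^ 2 := by
  set T : X → ℝ := fun x => (inner ℝ f (φ x) : ℝ) ^ 2 with hT
  set M : ℝ := ‖f‖ ^ 2 with hM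
  have hM0 : 0 ≤ M := sq_nonneg _
  have hTm : Measurable T := by
    have : Measurable fun x => (inner ℝ f (φ x) : ℝ) :=
      ((innerSL ℝ f).continuous.measurable).comp hφm
    exact this.pow_const 2
  have hTnn : ∀ x, 0 ≤ T x := fun x => sq_nonneg _
  have hTle : ∀ x, T x ≤ M := by
    intro x
    have h1 : |(inner ℝ f (φ x) : ℝ)| ≤ ‖f‖ * ‖φ x‖ := by
      simpa using norm_inner_le_norm (𝕜 := ℝ) f (φ x)
    have h2 : ‖f‖ * ‖φ x‖ ≤ ‖f‖ * 1 :=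
      mul_le_mul_of_nonneg_left (hφ x) (norm_nonneg f)
    have : |(inner ℝ f (φ x) : ℝ)| ≤ ‖f‖ := by linarith
    calc T x = |(inner ℝ f (φ x) : ℝ)| ^ 2 := by rw [sq_abs]
      _ ≤ ‖f‖ ^ 2 := by
          exact pow_le_pow_left₀ (abs_nonneg _) this 2
  have hSmeas : ∀ t : ℝ, MeasurableSet {x | t ≤ T x} :=
    fun t => measurableSet_le measurable_const hTm
  have hint : ∀ (μ : Measure X) [IsProbabilityMeasure μ], Integrable T μ := by
    intro μ _
    refine ⟨hTm.aestronglyMeasurable, ?_⟩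
    apply HasFiniteIntegral.of_bounded (C := M)
    filter_upwards with x
    rw [Real.norm_eq_abs, abs_of_nonneg (hTnn x)]
    exact hTle x
  -- layer cake for p and q
  have hlp : ∫ x, T x ∂p = ∫ t in Set.Ioc 0 M, ((p {x | t ≤ T x}).toReal) :=
    (hint p).integral_eq_integral_Ioc_meas_le (Filter.Eventually.of_forall hTnn)
      (Filter.Eventually.of_forall hTle)
  have hlq : ∫ x, T x ∂q = ∫ t in Set.Ioc 0 M, ((q {x | t ≤ T x}).toReal) :=
    (hint q).integral_eq_integral_Ioc_meas_le (Filter.Eventually.of_forall hTnn)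
      (Filter.Eventually.of_forall hTle)
  -- integrability of the tail functions on Ioc 0 M
  have tail_mble : ∀ (μ : Measure X), Measurable fun t : ℝ => (μ {x | t ≤ T x}).toReal := by
    intro μ
    refine Measurable.ennreal_toReal ?_
    exact Antitone.measurable (fun s t hst => measure_mono (fun x hx => le_trans hst hx))
  have tail_int : ∀ (μ : Measure X) [IsProbabilityMeasure μ],
      IntegrableOn (fun t : ℝ => (μ {x | t ≤ T x}).toReal) (Set.Ioc 0 M) := by
    intro μ _
    apply Measure.integrableOn_of_bounded (M := 1) measure_Ioc_lt_top.ne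
      (tail_mble μ).aestronglyMeasurable
    filter_upwards with t
    rw [Real.norm_eq_abs, abs_of_nonneg ENNReal.toReal_nonneg]
    exact ENNReal.toReal_le_of_le_ofReal one_pos.le (by simpa using prob_le_one)
  have key : ∫ t in Set.Ioc 0 M, ((p {x | t ≤ T x}).toReal)
      ≤ ∫ t in Set.Ioc 0 M, (Real.exp ε * (q {x | t ≤ T x}).toReal + δ / 2) := by
    refine setIntegral_mono_on (tail_int p) ?_ measurableSet_Ioc ?_
    · exact ((tail_int q).const_mul _).add (integrableOn_const measure_Ioc_lt_top.ne)
    · intro t _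
      exact hdp _ (hSmeas t)
  have hrhs : ∫ t in Set.Ioc 0 M, (Real.exp ε * (q {x | t ≤ T x}).toReal + δ / 2)
      = (Real.exp ε * ∫ t in Set.Ioc 0 M, ((q {x | t ≤ T x}).toReal))
        + δ / 2 * ((volume (Set.Ioc (0:ℝ) M)).toReal) := by
    rw [integral_add ((tail_int q).const_mul _)
        (integrableOn_const measure_Ioc_lt_top.ne),
      integral_const_mul, setIntegral_const, smul_eq_mul,
      mul_comm (volume.real (Set.Ioc (0:ℝ) M)) (δ/2), Measure.real]
  have hvol : (volume (Set.Ioc (0:ℝ) M)).toReal = M := by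
    rw [Real.volume_Ioc, ENNReal.toReal_ofReal (by linarith)]
    simp
  calc ∫ x, T x ∂p ≤ (Real.exp ε * ∫ x, T x ∂q) + δ / 2 * M := by
        rw [hlp, hlq]; rw [hrhs, hvol] at key; exact key
    _ ≤ Real.exp ε * ∫ x, T x ∂q + δ * M := by nlinarith
end

section
/- Layer-cake step: if T : X → [0,1] is measurable, p, q are probability measures, and ∫ T dp − e^ε ∫ T dq − δ > 0, then there exists s ∈ [0,1] such that the set S = {x : T(x) ≥ s} satisfies p(S) > e^ε q(S) + δ. -/
open MeasureTheory

/-- Layer-cake step: if `T : X → [0,1]` is measurable and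
`∫ T dp − e^ε ∫ T dq − δ > 0`, then some super-level set `S = {x : T(x) ≥ s}` satisfies
`p(S) > e^ε q(S) + δ`. -/
theorem layer_cake_level_set {X : Type*} [MeasurableSpace X]
    (p q : Measure X) [IsProbabilityMeasure p] [IsProbabilityMeasure q]
    (T : X → ℝ) (hT : Measurable T) (hT0 : ∀ x, 0 ≤ T x) (hT1 : ∀ x, T x ≤ 1)
    (ε δ : ℝ) (hδ : 0 < δ)
    (h : 0 < ∫ x, T x ∂p - Real.exp ε * ∫ x, T x ∂q - δ) :
    ∃ s ∈ Set.Icc (0 : ℝ) 1,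
      Real.exp ε * (q {x | s ≤ T x}).toReal + δ < (p {x | s ≤ T x}).toReal := by
  by_contra hcon
  push_neg at hcon
  set F : ℝ → ℝ := fun s => (p {x | s ≤ T x}).toReal with hF
  set G : ℝ → ℝ := fun s => (q {x | s ≤ T x}).toReal with hG
  have hbound : ∀ x, ‖T x‖ ≤ 1 := fun x => by
    rw [Real.norm_eq_abs, abs_of_nonneg (hT0 x)]; exact hT1 x
  have hintp : Integrable T p :=
    (integrable_const 1).mono' hT.aestronglyMeasurable (Filter.Eventually.of_forall hbound)
  have hintq : Integrable T q :=
    (integrable_const 1).mono' hT.aestronglyMeasurable (Filter.Eventually.of_forall hbound)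
  have hp : ∫ x, T x ∂p = ∫ s in Set.Ioc 0 1, F s :=
    hintp.integral_eq_integral_Ioc_meas_le (Filter.Eventually.of_forall hT0)
      (Filter.Eventually.of_forall hT1)
  have hq : ∫ x, T x ∂q = ∫ s in Set.Ioc 0 1, G s :=
    hintq.integral_eq_integral_Ioc_meas_le (Filter.Eventually.of_forall hT0)
      (Filter.Eventually.of_forall hT1)
  have measF : ∀ (μ : Measure X), Measurable (fun s => (μ {x | s ≤ T x}).toReal) := by
    intro μ
    have anti : Antitone (fun s : ℝ => μ {x | s ≤ T x}) :=
      fun _ _ hst => measure_mono (fun _ hx => le_trans hst hx)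
    exact anti.measurable.ennreal_toReal
  have hintF : ∀ (μ : Measure X) [IsProbabilityMeasure μ],
      Integrable (fun s => (μ {x | s ≤ T x}).toReal) (volume.restrict (Set.Ioc (0:ℝ) 1)) := by
    intro μ _
    refine (integrable_const 1).mono' (measF μ).aestronglyMeasurable
      (Filter.Eventually.of_forall fun s => ?_)
    rw [Real.norm_eq_abs, abs_of_nonneg ENNReal.toReal_nonneg]
    exact ENNReal.toReal_le_of_le_ofReal one_pos.le (by simpa using prob_le_one)
  have key : ∫ s in Set.Ioc (0:ℝ) 1, (F s - Real.exp ε * G s - δ) ≤ 0 := by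
    refine setIntegral_nonpos measurableSet_Ioc fun s hs => ?_
    have := hcon s ⟨hs.1.le, hs.2⟩
    linarith
  have heq : ∫ s in Set.Ioc (0:ℝ) 1, (F s - Real.exp ε * G s - δ) =
      (∫ s in Set.Ioc (0:ℝ) 1, F s) - Real.exp ε * (∫ s in Set.Ioc (0:ℝ) 1, G s) - δ := by
    have hint1 : Integrable (fun s => F s - Real.exp ε * G s)
        (volume.restrict (Set.Ioc (0:ℝ) 1)) := (hintF p).sub ((hintF q).const_mul (Real.exp ε))
    rw [integral_sub hint1 (integrable_const δ),
      integral_sub (hintF p) ((hintF q).const_mul (Real.exp ε)),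
      integral_const_mul, integral_const]
    simp [Real.volume_Ioc]
    rfl
  rw [heq] at key
  rw [hp, hq] at h
  linarith
end

section
/- Perturbation bound for α-trace powers: let α ≥ 2 and let A, Â be n×n symmetric positive semidefinite matrices with eigenvalues in [0,1] and tr A = tr Â = 1. Then |tr(Â^α) − tr(A^α)| ≤ 2α ‖Â − A‖, where ‖·‖ is the spectral (operator) norm. -/
open Matrix

open scoped Matrix.Norms.L2Operator

section Aux

variable {n : Type*} [Fintype n] [DecidableEq n]

private lemma scalar_key {α x y : ℝ} (hα : 2 ≤ α) (hy0 : 0 ≤ y) (hyx : y ≤ x) (hx1 : x ≤ 1) :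
    x ^ α - y ^ α ≤ α * (x - y) * (x + y) := by
  rcases eq_or_lt_of_le (hy0.trans hyx) with h0 | hx0
  · have hx : x = 0 := h0.symm
    have hy : y = 0 := le_antisymm (hx ▸ hyx) hy0
    simp [hx, hy]
  · set t : ℝ := y / x with ht
    have ht0 : 0 ≤ t := div_nonneg hy0 hx0.le
    have hyt : y = t * x := by rw [ht, div_mul_cancel₀ y hx0.ne']
    have hα1 : (1:ℝ) ≤ α := by linarith
    have hbern : 1 + α * (t - 1) ≤ t ^ α := by
      have := one_add_mul_self_le_rpow_one_add (by linarith : (-1:ℝ) ≤ t - 1) hα1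
      simpa using this
    have hyα : y ^ α = t ^ α * x ^ α := by
      rw [hyt, Real.mul_rpow ht0 hx0.le]
    have hxα : (0:ℝ) ≤ x ^ α := Real.rpow_nonneg hx0.le α
    have h1 : x ^ α - y ^ α = x ^ α * (1 - t ^ α) := by rw [hyα]; ring
    have h2 : x ^ α * (1 - t ^ α) ≤ x ^ α * (α * (1 - t)) := by
      apply mul_le_mul_of_nonneg_left (by linarith) hxα
    have hxpow : x ^ α = x ^ (α - 1) * x := by
      have h := Real.rpow_add hx0 (α-1) 1
      rw [sub_add_cancel, Real.rpow_one] at h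
      exact h
    have hxle : x ^ (α - 1) ≤ x := by
      calc x ^ (α-1) ≤ x ^ (1:ℝ) :=
            Real.rpow_le_rpow_of_exponent_ge hx0 hx1 (by linarith)
        _ = x := Real.rpow_one x
    have hx1t : 0 ≤ x * (1 - t) := by
      have ht1 : t ≤ 1 := by rw [ht]; exact div_le_one_of_le₀ hyx hx0.le
      have : 0 ≤ 1 - t := by linarith
      positivity
    calc x ^ α - y ^ α ≤ x ^ α * (α * (1 - t)) := by rw [h1]; exact h2
      _ = α * (x ^ (α-1)) * (x * (1 - t)) := by rw [hxpow]; ring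
      _ ≤ α * x * (x * (1-t)) := by
          apply mul_le_mul_of_nonneg_right _ hx1t
          exact mul_le_mul_of_nonneg_left hxle (by linarith)
      _ = α * (x - y) * x := by rw [hyt]; ring
      _ ≤ α * (x - y) * (x + y) := by
          have h3 : 0 ≤ α * (x - y) := mul_nonneg (by linarith) (by linarith)
          nlinarith

private lemma scalar_key_abs {α x y : ℝ} (hα : 2 ≤ α) (hx : x ∈ Set.Icc (0:ℝ) 1)
    (hy : y ∈ Set.Icc (0:ℝ) 1) : |x ^ α - y ^ α| ≤ α * |x - y| * (x + y) := by
  rcases le_total y x with h | h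
  · have h1 := scalar_key hα hy.1 h hx.2
    have h2 : (0:ℝ) ≤ x ^ α - y ^ α := by
      have := Real.rpow_le_rpow hy.1 h (by linarith : (0:ℝ) ≤ α)
      linarith
    rw [abs_of_nonneg h2, abs_of_nonneg (by linarith : (0:ℝ) ≤ x - y)]
    exact h1
  · have h1 := scalar_key hα hx.1 h hy.2
    have h2 : (0:ℝ) ≤ y ^ α - x ^ α := by
      have := Real.rpow_le_rpow hx.1 h (by linarith : (0:ℝ) ≤ α)
      linarith
    rw [abs_of_nonpos (by linarith : x ^ α - y ^ α ≤ 0), abs_of_nonpos (by linarith : x - y ≤ 0)]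
    calc -(x^α - y^α) = y^α - x^α := by ring
      _ ≤ α * (y - x) * (y + x) := h1
      _ = α * -(x-y) * (x + y) := by ring

private lemma trace_mpow' {A : Matrix n n ℝ} (hH : A.IsHermitian) (r : ℝ) :
    (mpow A r).trace = ∑ i, hH.eigenvalues i ^ r := by
  rw [mpow, dif_pos hH, Matrix.trace_mul_cycle,
    Matrix.mem_unitaryGroup_iff'.mp (hH.eigenvectorUnitary).2, one_mul, Matrix.trace_diagonal]

private lemma trace_eq_sum_eigen {A : Matrix n n ℝ} (hH : A.IsHermitian) :
    A.trace = ∑ i, hH.eigenvalues i := by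
  conv_lhs => rw [hH.spectral_theorem, Unitary.conjStarAlgAut_apply]
  rw [Matrix.trace_mul_cycle, Matrix.mem_unitaryGroup_iff'.mp (hH.eigenvectorUnitary).2,
    one_mul, Matrix.trace_diagonal]
  simp

private lemma psd_diag_nonneg {P : Matrix n n ℝ} (hP : P.PosSemidef) (j : n) : 0 ≤ P j j := by
  exact hP.diag_nonneg

private lemma onesided (α : ℝ) (hα : 2 ≤ α) (A B : Matrix n n ℝ)
    (hA : A.PosSemidef) (hAI : ((1 : Matrix n n ℝ) - A).PosSemidef)
    (hB : B.PosSemidef) (hBI : ((1 : Matrix n n ℝ) - B).PosSemidef)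
    (htrA : A.trace = 1) (htrB : B.trace = 1) :
    (mpow B α).trace - (mpow A α).trace ≤ 2 * α * ‖B - A‖ := by
  classical
  have hAh : A.IsHermitian := hA.1
  have hBh : B.IsHermitian := hB.1
  set U : Matrix n n ℝ := (hAh.eigenvectorUnitary : Matrix n n ℝ) with hUdef
  set V : Matrix n n ℝ := (hBh.eigenvectorUnitary : Matrix n n ℝ) with hVdef
  have hUU : star U * U = 1 := Matrix.mem_unitaryGroup_iff'.mp (hAh.eigenvectorUnitary).2
  have hUU' : U * star U = 1 := Matrix.mem_unitaryGroup_iff.mp (hAh.eigenvectorUnitary).2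
  have hVV : star V * V = 1 := Matrix.mem_unitaryGroup_iff'.mp (hBh.eigenvectorUnitary).2
  have hVV' : V * star V = 1 := Matrix.mem_unitaryGroup_iff.mp (hBh.eigenvectorUnitary).2
  have hAdiag : star U * A * U = Matrix.diagonal hAh.eigenvalues := by
    have := hAh.conjStarAlgAut_star_eigenvectorUnitary
    simpa using this
  have hBdiag : star V * B * V = Matrix.diagonal hBh.eigenvalues := by
    have := hBh.conjStarAlgAut_star_eigenvectorUnitary
    simpa using this
  have hAspec : A = U * Matrix.diagonal hAh.eigenvalues * star U := by
    have := hAh.spectral_theorem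
    simpa using this
  set W : Matrix n n ℝ := star U * V with hWdef
  have hWW : star W * W = 1 := by
    have h : star V * U * (star U * V) = star V * (U * star U) * V := by
      simp only [Matrix.mul_assoc]
    rw [hWdef, Matrix.star_mul, star_star, h, hUU', Matrix.mul_one, hVV]
  have hWW' : W * star W = 1 := by
    have h : star U * V * (star V * U) = star U * (V * star V) * U := by
      simp only [Matrix.mul_assoc]
    rw [hWdef, Matrix.star_mul, star_star, h, hVV', Matrix.mul_one, hUU]
  set M : Matrix n n ℝ := star V * A * V with hMdef
  have hMW : M = star W * Matrix.diagonal hAh.eigenvalues * W := by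
    rw [hMdef, hWdef, Matrix.star_mul, star_star]
    conv_lhs => rw [hAspec]
    simp only [Matrix.mul_assoc]
  have hMjj : ∀ j, M j j = ∑ p, (W p j)^2 * hAh.eigenvalues p := by
    intro j
    rw [hMW, Matrix.mul_assoc, Matrix.mul_apply]
    refine Finset.sum_congr rfl fun p _ => ?_
    rw [Matrix.diagonal_mul]
    simp [Matrix.star_apply]
    ring
  have hcol : ∀ j, ∑ p, (W p j)^2 = 1 := by
    intro j
    have h := Matrix.ext_iff.2 hWW j j
    simpa [Matrix.mul_apply, Matrix.star_apply, Matrix.one_apply, sq] using h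
  have hrow : ∀ p, ∑ j, (W p j)^2 = 1 := by
    intro p
    have h := Matrix.ext_iff.2 hWW' p p
    simpa [Matrix.mul_apply, Matrix.star_apply, Matrix.one_apply, sq] using h
  have hlam0 : ∀ p, 0 ≤ hAh.eigenvalues p := hA.eigenvalues_nonneg
  have hmu0 : ∀ j, 0 ≤ hBh.eigenvalues j := hB.eigenvalues_nonneg
  have hlam1 : ∀ p, hAh.eigenvalues p ≤ 1 := by
    intro p
    have hsub : star U * ((1:Matrix n n ℝ) - A) * U = 1 - Matrix.diagonal hAh.eigenvalues := by
      rw [Matrix.mul_sub, Matrix.mul_one, Matrix.sub_mul, hUU, hAdiag]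
    have h0 := psd_diag_nonneg (hAI.conjTranspose_mul_mul_same U) p
    rw [← Matrix.star_eq_conjTranspose, hsub] at h0
    have : (0:ℝ) ≤ 1 - hAh.eigenvalues p := by
      simpa [Matrix.sub_apply, Matrix.one_apply, Matrix.diagonal_apply] using h0
    linarith
  have hmu1 : ∀ j, hBh.eigenvalues j ≤ 1 := by
    intro j
    have hsub : star V * ((1:Matrix n n ℝ) - B) * V = 1 - Matrix.diagonal hBh.eigenvalues := by
      rw [Matrix.mul_sub, Matrix.mul_one, Matrix.sub_mul, hVV, hBdiag]
    have h0 := psd_diag_nonneg (hBI.conjTranspose_mul_mul_same V) j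
    rw [← Matrix.star_eq_conjTranspose, hsub] at h0
    have : (0:ℝ) ≤ 1 - hBh.eigenvalues j := by
      simpa [Matrix.sub_apply, Matrix.one_apply, Matrix.diagonal_apply] using h0
    linarith
  have hm0 : ∀ j, 0 ≤ M j j := by
    intro j
    rw [hMjj j]
    exact Finset.sum_nonneg fun p _ => mul_nonneg (sq_nonneg _) (hlam0 p)
  have hm1 : ∀ j, M j j ≤ 1 := by
    intro j
    rw [hMjj j]
    calc ∑ p, (W p j)^2 * hAh.eigenvalues p ≤ ∑ p, (W p j)^2 * 1 :=
          Finset.sum_le_sum fun p _ => mul_le_mul_of_nonneg_left (hlam1 p) (sq_nonneg _)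
      _ = 1 := by simpa using hcol j
  have hMsum : ∑ j, M j j = 1 := by
    have h1 : M.trace = A.trace := by
      rw [hMdef, Matrix.trace_mul_cycle, hVV', Matrix.one_mul]
    calc ∑ j, M j j = M.trace := by simp [Matrix.trace, Matrix.diag]
      _ = 1 := by rw [h1, htrA]
  have hmusum : ∑ j, hBh.eigenvalues j = 1 := by
    rw [← trace_eq_sum_eigen hBh, htrB]
  -- perturbation bound on diagonal entries
  have hdelta : ∀ j, |hBh.eigenvalues j - M j j| ≤ ‖B - A‖ := by
    intro j
    set v : EuclideanSpace ℝ n := (EuclideanSpace.equiv n ℝ).symm (fun i => V i j) with hv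
    have hvsq : ∑ i, (V i j)^2 = 1 := by
      have h := Matrix.ext_iff.2 hVV j j
      simpa [Matrix.mul_apply, Matrix.star_apply, Matrix.one_apply, sq] using h
    have hvnorm : ‖v‖ = 1 := by
      rw [EuclideanSpace.norm_eq]
      have : ∀ i, ‖v i‖^2 = (V i j)^2 := by
        intro i
        rw [hv]
        simp [Real.norm_eq_abs, sq_abs]
      simp only [this, hvsq, Real.sqrt_one]
    have hentry : hBh.eigenvalues j - M j j = ∑ i, V i j * ((B - A) *ᵥ (fun k => V k j)) i := by
      have h1 : (star V * (B - A) * V) j j = hBh.eigenvalues j - M j j := by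
        rw [Matrix.mul_sub, Matrix.sub_mul, hMdef, Matrix.sub_apply, hBdiag]
        simp [Matrix.diagonal_apply]
      rw [← h1, Matrix.mul_assoc, Matrix.mul_apply]
      refine Finset.sum_congr rfl fun i _ => ?_
      simp [Matrix.star_apply, Matrix.mulVec, Matrix.mul_apply, dotProduct]
    set w : EuclideanSpace ℝ n := (EuclideanSpace.equiv n ℝ).symm ((B - A) *ᵥ (fun k => V k j))
      with hw
    have hinner : hBh.eigenvalues j - M j j = @inner ℝ _ _ v w := by
      rw [hentry, PiLp.inner_apply]
      simp [hv, hw, RCLike.inner_apply]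
      exact Finset.sum_congr rfl fun i _ => mul_comm _ _
    have hopn : ‖w‖ ≤ ‖B - A‖ := by
      have h := Matrix.l2_opNorm_mulVec (B - A) v
      rw [hvnorm, mul_one] at h
      have hwe : w = (EuclideanSpace.equiv n ℝ).symm ((B - A) *ᵥ v) := rfl
      rw [hwe]; exact h
    rw [hinner]
    calc |@inner ℝ _ _ v w| ≤ ‖v‖ * ‖w‖ := abs_real_inner_le_norm v w
      _ ≤ 1 * ‖B - A‖ := by rw [hvnorm]; exact mul_le_mul_of_nonneg_left hopn (by norm_num)
      _ = ‖B - A‖ := one_mul _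
  -- Jensen
  have hjensen : ∑ j, (M j j) ^ α ≤ ∑ p, hAh.eigenvalues p ^ α := by
    have hconv : ConvexOn ℝ (Set.Ici 0) (fun x : ℝ => x ^ α) := convexOn_rpow (by linarith)
    have h1 : ∀ j, (M j j) ^ α ≤ ∑ p, (W p j)^2 * hAh.eigenvalues p ^ α := by
      intro j
      have h := hconv.map_sum_le (t := Finset.univ) (w := fun p => (W p j)^2)
        (p := hAh.eigenvalues) (fun p _ => sq_nonneg _) (hcol j) (fun p _ => hlam0 p)
      rw [hMjj j]
      simpa [smul_eq_mul] using h
    calc ∑ j, (M j j)^α ≤ ∑ j, ∑ p, (W p j)^2 * hAh.eigenvalues p ^ α :=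
          Finset.sum_le_sum (fun j _ => h1 j)
      _ = ∑ p, hAh.eigenvalues p ^ α := by
          rw [Finset.sum_comm]
          refine Finset.sum_congr rfl fun p _ => ?_
          rw [← Finset.sum_mul, hrow p, one_mul]
  -- assemble
  have hstep : ∀ j, hBh.eigenvalues j ^ α - (M j j) ^ α
      ≤ α * ‖B - A‖ * (hBh.eigenvalues j + M j j) := by
    intro j
    have hs := scalar_key_abs hα ⟨hmu0 j, hmu1 j⟩ ⟨hm0 j, hm1 j⟩ (α := α)
    have hsum0 : (0:ℝ) ≤ hBh.eigenvalues j + M j j := by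
      have := hmu0 j; have := hm0 j; linarith
    calc hBh.eigenvalues j ^ α - (M j j) ^ α ≤ |hBh.eigenvalues j ^ α - (M j j) ^ α| :=
          le_abs_self _
      _ ≤ α * |hBh.eigenvalues j - M j j| * (hBh.eigenvalues j + M j j) := hs
      _ ≤ α * ‖B - A‖ * (hBh.eigenvalues j + M j j) := by
          apply mul_le_mul_of_nonneg_right _ hsum0
          exact mul_le_mul_of_nonneg_left (hdelta j) (by linarith)
  rw [trace_mpow' hBh, trace_mpow' hAh]
  calc ∑ j, hBh.eigenvalues j ^ α - ∑ p, hAh.eigenvalues p ^ α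
      ≤ ∑ j, hBh.eigenvalues j ^ α - ∑ j, (M j j) ^ α := by linarith [hjensen]
    _ = ∑ j, (hBh.eigenvalues j ^ α - (M j j) ^ α) := by rw [Finset.sum_sub_distrib]
    _ ≤ ∑ j, α * ‖B - A‖ * (hBh.eigenvalues j + M j j) := Finset.sum_le_sum fun j _ => hstep j
    _ = α * ‖B - A‖ * (∑ j, (hBh.eigenvalues j + M j j)) := by rw [Finset.mul_sum]
    _ = 2 * α * ‖B - A‖ := by
        rw [Finset.sum_add_distrib, hmusum, hMsum]
        ring

end Aux

/-- Perturbation bound for `α`-trace powers: for symmetric PSD matrices `A, Â` with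
eigenvalues in `[0,1]` and unit trace, `|tr(Â^α) − tr(A^α)| ≤ 2α‖Â − A‖` in the
spectral (ℓ²-operator) norm, for `α ≥ 2`. -/
theorem trace_rpow_perturbation {n : Type*} [Fintype n] [DecidableEq n]
    (α : ℝ) (hα : 2 ≤ α)
    (A Ahat : Matrix n n ℝ)
    (hA : A.PosSemidef) (hAI : ((1 : Matrix n n ℝ) - A).PosSemidef)
    (hAhat : Ahat.PosSemidef) (hAhatI : ((1 : Matrix n n ℝ) - Ahat).PosSemidef)
    (htrA : A.trace = 1) (htrAhat : Ahat.trace = 1) :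
    |(mpow Ahat α).trace - (mpow A α).trace| ≤ 2 * α * ‖Ahat - A‖ := by
  rw [abs_sub_le_iff]
  constructor
  · exact onesided α hα A Ahat hA hAI hAhat hAhatI htrA htrAhat
  · have h := onesided α hα Ahat A hAhat hAhatI hA hAI htrAhat htrA
    rwa [norm_sub_rev] at h
end
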